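/- Let T = (Φ,B,η,h) be a stochastic transformation from M to M', and define T⁻¹ = (Φ⁻¹, (B∘Φ⁻¹)⁻¹, (η∘Φ⁻¹)⁻¹, −((1/√η)·B·h)∘Φ⁻¹), a stochastic transformation from M' to M. Then, with respect to the composition law T₂∘T₁ = (Φ₂∘Φ₁, (B₂∘Φ₁)·B₁, (η₂∘Φ₁)·η₁, √η₁·B₁⁻¹·(h₂∘Φ₁) + h₁), one has T∘T⁻¹ = (id_{M'}, I, 1, 0) and T⁻¹∘T = (id_M, I, 1, 0); consequently E_{T⁻¹}(E_T(μ,σ)) = (μ,σ) for every SDE (μ,σ) on M. -/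

import Mathlib

open Matrix

/-- Partial derivative `∂ᵢ f` of a scalar function on `ℝⁿ`. -/
noncomputable def pd {n : ℕ} (i : Fin n) (f : (Fin n → ℝ) → ℝ) (x : Fin n → ℝ) : ℝ :=
  fderiv ℝ f x (Pi.single i 1)

/-- Action `Y(f) = Yⁱ ∂ᵢ f` of a vector field on a scalar function. -/
noncomputable def vfd {n : ℕ} (Y : (Fin n → ℝ) → Fin n → ℝ)
    (f : (Fin n → ℝ) → ℝ) (x : Fin n → ℝ) : ℝ :=
  ∑ j, Y x j * pd j f x

/-- Infinitesimal generator `L(f) = ½ (σσᵀ)^{ij} ∂ᵢ∂ⱼ f + μⁱ ∂ᵢ f` of the SDE `(μ,σ)`. -/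
noncomputable def gen {n m : ℕ} (μ : (Fin n → ℝ) → Fin n → ℝ)
    (σ : (Fin n → ℝ) → Matrix (Fin n) (Fin m) ℝ)
    (f : (Fin n → ℝ) → ℝ) (x : Fin n → ℝ) : ℝ :=
  (1 / 2) * ∑ i, ∑ j, (∑ α, σ x i α * σ x j α) * pd i (pd j f) x
    + ∑ i, μ x i * pd i f x

/-- Entrywise smoothness of a vector-valued function on a set. -/
def SmoothVec {n k : ℕ} (M : Set (Fin n → ℝ)) (f : (Fin n → ℝ) → Fin k → ℝ) : Prop :=
  ∀ i, ContDiffOn ℝ (⊤ : ℕ∞) (fun x => f x i) M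

/-- Entrywise smoothness of a matrix-valued function on a set. -/
def SmoothMat {n k l : ℕ} (M : Set (Fin n → ℝ))
    (f : (Fin n → ℝ) → Matrix (Fin k) (Fin l) ℝ) : Prop :=
  ∀ i j, ContDiffOn ℝ (⊤ : ℕ∞) (fun x => f x i j) M

/-- The drift of the transformed SDE `E_T(μ,σ)`:
`E_T(μ) = ((1/η)[L(Φ) + ∇Φ·σ·h]) ∘ Φ⁻¹`, where `Ψ = Φ⁻¹`. -/
noncomputable def ETmu {n m : ℕ} (Φ Ψ : (Fin n → ℝ) → Fin n → ℝ)
    (η : (Fin n → ℝ) → ℝ) (h : (Fin n → ℝ) → Fin m → ℝ)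
    (μ : (Fin n → ℝ) → Fin n → ℝ) (σ : (Fin n → ℝ) → Matrix (Fin n) (Fin m) ℝ)
    (y : Fin n → ℝ) : Fin n → ℝ := fun i =>
  (η (Ψ y))⁻¹ * (gen μ σ (fun z => Φ z i) (Ψ y)
    + ∑ j, ∑ α, pd j (fun z => Φ z i) (Ψ y) * σ (Ψ y) j α * h (Ψ y) α)

/-- The diffusion coefficient of the transformed SDE `E_T(μ,σ)`:
`E_T(σ) = ((1/√η)·∇Φ·σ·B⁻¹) ∘ Φ⁻¹`, where `Ψ = Φ⁻¹`. -/
noncomputable def ETsigma {n m : ℕ} (Φ Ψ : (Fin n → ℝ) → Fin n → ℝ)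
    (B : (Fin n → ℝ) → Matrix (Fin m) (Fin m) ℝ) (η : (Fin n → ℝ) → ℝ)
    (σ : (Fin n → ℝ) → Matrix (Fin n) (Fin m) ℝ)
    (y : Fin n → ℝ) : Matrix (Fin n) (Fin m) ℝ :=
  Matrix.of fun i α =>
    (Real.sqrt (η (Ψ y)))⁻¹ *
      ∑ j, ∑ β, pd j (fun z => Φ z i) (Ψ y) * σ (Ψ y) j β * (B (Ψ y))⁻¹ β α

lemma clm_sum_single {n : ℕ} (L : (Fin n → ℝ) →L[ℝ] ℝ) (w : Fin n → ℝ) :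
    L w = ∑ j, w j * L (Pi.single j 1) := by
  have hw : w = ∑ j, w j • (Pi.single j 1 : Fin n → ℝ) := by
    funext k
    simp [Finset.sum_apply, Pi.single_apply]
  conv_lhs => rw [hw]
  rw [map_sum]
  simp [smul_eq_mul]

lemma pd_comp {n : ℕ} {Φ : (Fin n → ℝ) → Fin n → ℝ} {g : (Fin n → ℝ) → ℝ} {x : Fin n → ℝ}
    (hg : DifferentiableAt ℝ g (Φ x)) (hΦ : ∀ j, DifferentiableAt ℝ (fun z => Φ z j) x)
    (k : Fin n) :
    pd k (fun z => g (Φ z)) x = ∑ j, pd j g (Φ x) * pd k (fun z => Φ z j) x := by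
  have hΦd : DifferentiableAt ℝ Φ x := differentiableAt_pi.2 hΦ
  have hc : fderiv ℝ (fun z => g (Φ z)) x = (fderiv ℝ g (Φ x)).comp (fderiv ℝ Φ x) :=
    fderiv_comp x hg hΦd
  unfold pd
  rw [hc]
  simp only [ContinuousLinearMap.coe_comp', Function.comp_apply]
  rw [clm_sum_single (fderiv ℝ g (Φ x)) (fderiv ℝ Φ x (Pi.single k 1))]
  refine Finset.sum_congr rfl fun j _ => ?_
  rw [mul_comm]
  congr 1
  rw [fderiv_pi hΦ]
  rfl

lemma pd_const {n : ℕ} (p : Fin n) (c : ℝ) (x : Fin n → ℝ) : pd p (fun _ => c) x = 0 := by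
  unfold pd; rw [fderiv_fun_const]; simp

lemma pd_coord {n : ℕ} (k i : Fin n) (x : Fin n → ℝ) :
    pd k (fun z : Fin n → ℝ => z i) x = if i = k then 1 else 0 := by
  unfold pd
  have : (fun z : Fin n → ℝ => z i) = (ContinuousLinearMap.proj i : (Fin n → ℝ) →L[ℝ] ℝ) := rfl
  rw [this, ContinuousLinearMap.fderiv]
  simp [Pi.single_apply]

lemma pd_congr {n : ℕ} {U : Set (Fin n → ℝ)} (hU : IsOpen U) {f g : (Fin n → ℝ) → ℝ}
    (hfg : Set.EqOn f g U) {x : Fin n → ℝ} (hx : x ∈ U) (k : Fin n) :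
    pd k f x = pd k g x := by
  unfold pd
  rw [Filter.EventuallyEq.fderiv_eq (Filter.eventuallyEq_of_mem (hU.mem_nhds hx) hfg)]

lemma pd_contDiffOn {n : ℕ} {U : Set (Fin n → ℝ)} (hU : IsOpen U)
    {f : (Fin n → ℝ) → ℝ} (hf : ContDiffOn ℝ (⊤ : ℕ∞) f U) (j : Fin n) :
    ContDiffOn ℝ (⊤ : ℕ∞) (pd j f) U := by
  have h1 : ContDiffOn ℝ (⊤ : ℕ∞) (fun x => fderiv ℝ f x) U :=
    hf.fderiv_of_isOpen hU (by exact_mod_cast le_top)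
  exact h1.clm_apply contDiffOn_const

lemma diffAt_of_contDiffOn {n : ℕ} {U : Set (Fin n → ℝ)} (hU : IsOpen U)
    {f : (Fin n → ℝ) → ℝ} (hf : ContDiffOn ℝ (⊤ : ℕ∞) f U) {x} (hx : x ∈ U) :
    DifferentiableAt ℝ f x :=
  (hf.contDiffAt (hU.mem_nhds hx)).differentiableAt (by simp)

lemma pd_sum {n : ℕ} {x : Fin n → ℝ} (p : Fin n) (F : Fin n → (Fin n → ℝ) → ℝ)
    (hF : ∀ j, DifferentiableAt ℝ (F j) x) :
    pd p (fun z => ∑ j, F j z) x = ∑ j, pd p (F j) x := by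
  unfold pd
  rw [fderiv_fun_sum fun j _ => hF j]
  simp

lemma pd_mul {n : ℕ} {x : Fin n → ℝ} (p : Fin n) {a b : (Fin n → ℝ) → ℝ}
    (ha : DifferentiableAt ℝ a x) (hb : DifferentiableAt ℝ b x) :
    pd p (fun z => a z * b z) x = pd p a x * b x + a x * pd p b x := by
  unfold pd
  rw [fderiv_fun_mul ha hb]
  simp [smul_eq_mul]
  ring
lemma pd_pd_comp {n : ℕ} {M M' : Set (Fin n → ℝ)} (hM : IsOpen M) (hM' : IsOpen M')
    {Φ : (Fin n → ℝ) → Fin n → ℝ} {g : (Fin n → ℝ) → ℝ}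
    (hΦmap : Set.MapsTo Φ M M')
    (hΦs : ∀ j, ContDiffOn ℝ (⊤ : ℕ∞) (fun z => Φ z j) M)
    (hg : ContDiffOn ℝ (⊤ : ℕ∞) g M')
    {x : Fin n → ℝ} (hx : x ∈ M) (p q : Fin n) :
    pd p (pd q (fun z => g (Φ z))) x
      = ∑ j, ∑ k, pd k (pd j g) (Φ x) * pd p (fun z => Φ z k) x * pd q (fun z => Φ z j) x
        + ∑ j, pd j g (Φ x) * pd p (pd q (fun z => Φ z j)) x := by
  have hgd : ∀ z ∈ M', DifferentiableAt ℝ g z := fun z hz => diffAt_of_contDiffOn hM' hg hz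
  have hΦd : ∀ (z) (_ : z ∈ M) (j : Fin n), DifferentiableAt ℝ (fun z' => Φ z' j) z :=
    fun z hz j => diffAt_of_contDiffOn hM (hΦs j) hz
  have hpdg : ∀ j, ContDiffOn ℝ (⊤ : ℕ∞) (pd j g) M' := fun j => pd_contDiffOn hM' hg j
  -- step 1: congruence for pd q (g ∘ Φ) on M
  have hcong : Set.EqOn (pd q (fun z => g (Φ z)))
      (fun z => ∑ j, pd j g (Φ z) * pd q (fun z' => Φ z' j) z) M := by
    intro z hz
    exact pd_comp (hgd _ (hΦmap hz)) (hΦd z hz) q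
  rw [pd_congr hM hcong hx p]
  -- differentiability of the summands at x
  have hA : ∀ j, DifferentiableAt ℝ (fun z => pd j g (Φ z)) x := by
    intro j
    have h1 : DifferentiableAt ℝ (pd j g) (Φ x) :=
      diffAt_of_contDiffOn hM' (hpdg j) (hΦmap hx)
    exact h1.comp x (differentiableAt_pi.2 (hΦd x hx))
  have hB : ∀ j, DifferentiableAt ℝ (pd q (fun z' => Φ z' j)) x := by
    intro j
    exact diffAt_of_contDiffOn hM (pd_contDiffOn hM (hΦs j) q) hx
  rw [pd_sum p (fun j z => pd j g (Φ z) * pd q (fun z' => Φ z' j) z) (fun j => (hA j).mul (hB j))]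
  have hterm : ∀ j : Fin n,
      pd p (fun z => pd j g (Φ z) * pd q (fun z' => Φ z' j) z) x
        = (∑ k, pd k (pd j g) (Φ x) * pd p (fun z => Φ z k) x) * pd q (fun z => Φ z j) x
          + pd j g (Φ x) * pd p (pd q (fun z => Φ z j)) x := by
    intro j
    rw [pd_mul p (hA j) (hB j)]
    congr 1
    congr 1
    exact pd_comp (diffAt_of_contDiffOn hM' (hpdg j) (hΦmap hx)) (hΦd x hx) p
  rw [Finset.sum_congr rfl fun j _ => hterm j, Finset.sum_add_distrib]
  congr 1
  exact Finset.sum_congr rfl fun j _ => Finset.sum_mul ..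

lemma sum_delta_mul2 {m : ℕ} (f : Fin m → ℝ) (γ : Fin m) :
    ∑ β, f β * (if β = γ then 1 else 0) = f γ := by
  simp [mul_ite]

lemma sum_delta_mul' {m : ℕ} (f : Fin m → ℝ) (γ : Fin m) :
    ∑ β, (if γ = β then 1 else 0) * f β = f γ := by
  simp [ite_mul]

lemma sigma_alg {n m : ℕ} (e : ℝ) (he : 0 < e)
    (σm : Matrix (Fin n) (Fin m) ℝ) (Bi Bm : Matrix (Fin m) (Fin m) ℝ)
    (J K : Matrix (Fin n) (Fin n) ℝ) (i : Fin n) (α : Fin m)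
    (hKJ : ∀ i' k, ∑ j, K i' j * J j k = if i' = k then 1 else 0)
    (hBB : ∀ γ δ, ∑ β, Bi γ β * Bm β δ = if γ = δ then 1 else 0) :
    Real.sqrt e * ∑ j, ∑ β, K i j
        * ((Real.sqrt e)⁻¹ * ∑ k, ∑ γ, J j k * σm k γ * Bi γ β) * Bm β α
      = σm i α := by
  have hs0 : Real.sqrt e ≠ 0 := (Real.sqrt_pos.mpr he).ne'
  set Dσ : Fin n → Fin m → ℝ := fun j γ => ∑ k, J j k * σm k γ with hDdef
  have hA : ∀ (j : Fin n) (β : Fin m),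
      ∑ k, ∑ γ, J j k * σm k γ * Bi γ β = ∑ γ, Dσ j γ * Bi γ β := by
    intro j β
    rw [Finset.sum_comm]
    exact Finset.sum_congr rfl fun γ _ => (Finset.sum_mul ..).symm
  simp only [hA]
  calc Real.sqrt e * ∑ j, ∑ β, K i j
        * ((Real.sqrt e)⁻¹ * ∑ γ, Dσ j γ * Bi γ β) * Bm β α
      = ∑ j, ∑ β, K i j * (∑ γ, Dσ j γ * Bi γ β) * Bm β α := by
        rw [Finset.mul_sum]
        refine Finset.sum_congr rfl fun j _ => ?_
        rw [Finset.mul_sum]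
        refine Finset.sum_congr rfl fun β _ => ?_
        field_simp
    _ = ∑ j, K i j * ∑ γ, Dσ j γ * (∑ β, Bi γ β * Bm β α) := by
        refine Finset.sum_congr rfl fun j _ => ?_
        rw [Finset.mul_sum]
        calc ∑ β, K i j * (∑ γ, Dσ j γ * Bi γ β) * Bm β α
            = ∑ β, ∑ γ, K i j * (Dσ j γ * Bi γ β) * Bm β α := by
              refine Finset.sum_congr rfl fun β _ => ?_
              rw [Finset.mul_sum, Finset.sum_mul]
          _ = ∑ γ, ∑ β, K i j * (Dσ j γ * Bi γ β) * Bm β α := by exact Finset.sum_comm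
          _ = ∑ γ, K i j * (Dσ j γ * (∑ β, Bi γ β * Bm β α)) := by
              refine Finset.sum_congr rfl fun γ _ => ?_
              rw [Finset.mul_sum, Finset.mul_sum]
              exact Finset.sum_congr rfl fun β _ => by ring
    _ = ∑ j, K i j * Dσ j α := by
        refine Finset.sum_congr rfl fun j _ => ?_
        congr 1
        rw [Finset.sum_congr rfl fun γ _ => by rw [hBB γ α]]
        exact sum_delta_mul2 (fun γ => Dσ j γ) α
    _ = ∑ k, (∑ j, K i j * J j k) * σm k α := by
        calc ∑ j, K i j * Dσ j α
            = ∑ j, ∑ k, K i j * J j k * σm k α := by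
              refine Finset.sum_congr rfl fun j _ => ?_
              rw [Finset.mul_sum]
              exact Finset.sum_congr rfl fun k _ => by ring
          _ = ∑ k, ∑ j, K i j * J j k * σm k α := by exact Finset.sum_comm
          _ = ∑ k, (∑ j, K i j * J j k) * σm k α := by
              exact Finset.sum_congr rfl fun k _ => (Finset.sum_mul ..).symm
    _ = σm i α := by
        rw [Finset.sum_congr rfl fun k _ => by rw [hKJ i k]]
        exact sum_delta_mul' (fun k => σm k α) i
lemma sum_delta_mul {m : ℕ} (f : Fin m → ℝ) (γ : Fin m) :
    ∑ β, f β * (if γ = β then 1 else 0) = f γ := by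
  simp [mul_ite]
lemma neg_mul_sum {k : ℕ} (c : ℝ) (f : Fin k → ℝ) :
    -(c * ∑ j, f j) = ∑ j, -(c * f j) := by
  rw [Finset.mul_sum, ← Finset.sum_neg_distrib]

lemma sum_comm4 {k : ℕ} (F : Fin k → Fin k → Fin k → Fin k → ℝ) :
    ∑ p, ∑ q, ∑ a, ∑ b, F p q a b = ∑ a, ∑ b, ∑ p, ∑ q, F p q a b := by
  calc ∑ p, ∑ q, ∑ a, ∑ b, F p q a b
      = ∑ p, ∑ a, ∑ q, ∑ b, F p q a b :=
        Finset.sum_congr rfl fun p _ => by exact Finset.sum_comm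
    _ = ∑ a, ∑ p, ∑ q, ∑ b, F p q a b := by exact Finset.sum_comm
    _ = ∑ a, ∑ p, ∑ b, ∑ q, F p q a b :=
        Finset.sum_congr rfl fun a _ => Finset.sum_congr rfl fun p _ => by
          exact Finset.sum_comm
    _ = ∑ a, ∑ b, ∑ p, ∑ q, F p q a b :=
        Finset.sum_congr rfl fun a _ => by exact Finset.sum_comm

lemma drift_alg {n m : ℕ} (e : ℝ) (he : 0 < e)
    (σm : Matrix (Fin n) (Fin m) ℝ) (Bi Bm : Matrix (Fin m) (Fin m) ℝ)
    (hv : Fin m → ℝ) (μv : Fin n → ℝ)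
    (J K : Matrix (Fin n) (Fin n) ℝ)
    (H : Fin n → Fin n → ℝ) (P : Fin n → Fin n → Fin n → ℝ) (G : Fin n → ℝ) (i : Fin n)
    (hKJ : ∀ i' k, ∑ j, K i' j * J j k = if i' = k then 1 else 0)
    (hBorth : ∀ γ δ, ∑ α, Bi γ α * Bi δ α = if γ = δ then 1 else 0)
    (hBB : ∀ γ δ, ∑ α, Bi γ α * Bm α δ = if γ = δ then 1 else 0)
    (hsec : ∀ p q, ∑ j, ∑ k, H k j * J k p * J j q + ∑ j, K i j * P j p q = 0)
    (hG : ∀ p, G p = (1/2) * ∑ k, ∑ l, (∑ γ, σm k γ * σm l γ) * P p k l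
        + ∑ k, μv k * J p k) :
    e * ((1/2) * ∑ p, ∑ q,
          (∑ α, ((Real.sqrt e)⁻¹ * ∑ j, ∑ β, J p j * σm j β * Bi β α)
              * ((Real.sqrt e)⁻¹ * ∑ j, ∑ β, J q j * σm j β * Bi β α)) * H p q
        + ∑ p, (e⁻¹ * (G p + ∑ j, ∑ α, J p j * σm j α * hv α)) * K i p
        + ∑ j, ∑ α, K i j * ((Real.sqrt e)⁻¹ * ∑ k, ∑ β, J j k * σm k β * Bi β α)
            * (-((Real.sqrt e)⁻¹ * (∑ β, Bm α β * hv β)))) = μv i := by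
  have he0 : e ≠ 0 := he.ne'
  have hse : (Real.sqrt e)⁻¹ * (Real.sqrt e)⁻¹ = e⁻¹ := by
    rw [← mul_inv, Real.mul_self_sqrt he.le]
  set C : Fin n → Fin n → ℝ := fun k l => ∑ γ, σm k γ * σm l γ with hCdef
  set D : Fin n → Fin m → ℝ := fun p β => ∑ j, J p j * σm j β with hDdef
  have hA : ∀ (p : Fin n) (α : Fin m),
      ∑ j, ∑ β, J p j * σm j β * Bi β α = ∑ β, D p β * Bi β α := by
    intro p α
    rw [Finset.sum_comm]
    exact Finset.sum_congr rfl fun β _ => (Finset.sum_mul ..).symm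
  have hW : ∀ p : Fin n, ∑ j, ∑ α, J p j * σm j α * hv α = ∑ β, D p β * hv β := by
    intro p
    rw [Finset.sum_comm]
    exact Finset.sum_congr rfl fun β _ => (Finset.sum_mul ..).symm
  simp only [hA, hW]
  -- the diffusion coefficient contraction
  have hAA : ∀ p q : Fin n,
      ∑ α, (∑ β, D p β * Bi β α) * (∑ β, D q β * Bi β α)
        = ∑ k, ∑ l, J p k * J q l * C k l := by
    intro p q
    calc ∑ α, (∑ β, D p β * Bi β α) * (∑ β, D q β * Bi β α)
        = ∑ β, ∑ δ, ∑ α, (D p β * Bi β α) * (D q δ * Bi δ α) := by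
          rw [Finset.sum_congr rfl fun α _ => Finset.sum_mul_sum ..]
          rw [Finset.sum_comm]
          exact Finset.sum_congr rfl fun β _ => Finset.sum_comm
      _ = ∑ β, ∑ δ, D p β * D q δ * (if β = δ then 1 else 0) := by
          refine Finset.sum_congr rfl fun β _ => Finset.sum_congr rfl fun δ _ => ?_
          rw [← hBorth β δ, Finset.mul_sum]
          exact Finset.sum_congr rfl fun α _ => by ring
      _ = ∑ β, D p β * D q β := by
          refine Finset.sum_congr rfl fun β _ => ?_
          rw [sum_delta_mul (fun δ => D p β * D q δ) β]
      _ = ∑ k, ∑ l, J p k * J q l * C k l := by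
          calc ∑ β, D p β * D q β
              = ∑ k, ∑ l, ∑ β, (J p k * σm k β) * (J q l * σm l β) := by
                rw [Finset.sum_congr rfl fun β _ => Finset.sum_mul_sum ..]
                rw [Finset.sum_comm]
                exact Finset.sum_congr rfl fun k _ => Finset.sum_comm
            _ = ∑ k, ∑ l, J p k * J q l * C k l := by
                refine Finset.sum_congr rfl fun k _ => Finset.sum_congr rfl fun l _ => ?_
                rw [hCdef, Finset.mul_sum]
                exact Finset.sum_congr rfl fun γ _ => by ring
  have hcoef : ∀ p q : Fin n,
      ∑ α, ((Real.sqrt e)⁻¹ * ∑ β, D p β * Bi β α) * ((Real.sqrt e)⁻¹ * ∑ β, D q β * Bi β α)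
        = e⁻¹ * ∑ k, ∑ l, J p k * J q l * C k l := by
    intro p q
    rw [← hAA p q, Finset.mul_sum]
    exact Finset.sum_congr rfl fun α _ => by rw [← hse]; ring
  simp only [hcoef]
  -- the Girsanov term
  have h3 : ∀ j : Fin n,
      ∑ α, (∑ β, D j β * Bi β α) * (∑ β, Bm α β * hv β) = ∑ β, D j β * hv β := by
    intro j
    calc ∑ α, (∑ β, D j β * Bi β α) * (∑ γ, Bm α γ * hv γ)
        = ∑ β, ∑ γ, (D j β * hv γ) * (∑ α, Bi β α * Bm α γ) := by
          rw [Finset.sum_congr rfl fun α _ => Finset.sum_mul_sum ..]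
          rw [Finset.sum_comm]
          refine Finset.sum_congr rfl fun β _ => ?_
          rw [Finset.sum_comm]
          refine Finset.sum_congr rfl fun γ _ => ?_
          rw [Finset.mul_sum]
          exact Finset.sum_congr rfl fun α _ => by ring
      _ = ∑ β, D j β * hv β := by
          refine Finset.sum_congr rfl fun β _ => ?_
          rw [Finset.sum_congr rfl fun γ _ => by rw [hBB β γ]]
          rw [sum_delta_mul (fun γ => D j β * hv γ) β]
  have hgir : ∑ j, ∑ α, K i j * ((Real.sqrt e)⁻¹ * ∑ β, D j β * Bi β α)
      * (-((Real.sqrt e)⁻¹ * (∑ β, Bm α β * hv β)))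
      = -(e⁻¹ * ∑ j, K i j * ∑ β, D j β * hv β) := by
    calc ∑ j, ∑ α, K i j * ((Real.sqrt e)⁻¹ * ∑ β, D j β * Bi β α)
        * (-((Real.sqrt e)⁻¹ * (∑ β, Bm α β * hv β)))
        = ∑ j, -(e⁻¹ * (K i j * ∑ α, (∑ β, D j β * Bi β α) * (∑ β, Bm α β * hv β))) := by
          refine Finset.sum_congr rfl fun j _ => ?_
          have hexp : e⁻¹ * (K i j * ∑ α, (∑ β, D j β * Bi β α) * (∑ β, Bm α β * hv β))
              = ∑ α, e⁻¹ * (K i j * ((∑ β, D j β * Bi β α) * (∑ β, Bm α β * hv β))) := by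
            rw [Finset.mul_sum, Finset.mul_sum]
          rw [hexp, ← Finset.sum_neg_distrib]
          exact Finset.sum_congr rfl fun α _ => by rw [← hse]; ring
      _ = -(e⁻¹ * ∑ j, K i j * ∑ β, D j β * hv β) := by
          rw [show -(e⁻¹ * ∑ j, K i j * ∑ β, D j β * hv β)
              = ∑ j, -(e⁻¹ * (K i j * ∑ β, D j β * hv β)) from by
            rw [Finset.mul_sum, ← Finset.sum_neg_distrib]]
          exact Finset.sum_congr rfl fun j _ => by rw [h3 j]
  rw [hgir]
  -- pull out e⁻¹ from the first two sums
  have hpull1 : ∑ p, ∑ q, (e⁻¹ * ∑ k, ∑ l, J p k * J q l * C k l) * H p q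
      = e⁻¹ * ∑ p, ∑ q, (∑ k, ∑ l, J p k * J q l * C k l) * H p q := by
    rw [Finset.mul_sum]
    refine Finset.sum_congr rfl fun p _ => ?_
    rw [Finset.mul_sum]
    exact Finset.sum_congr rfl fun q _ => by ring
  have hpull2 : ∑ p, (e⁻¹ * (G p + ∑ β, D p β * hv β)) * K i p
      = e⁻¹ * ∑ p, (G p + ∑ β, D p β * hv β) * K i p := by
    rw [Finset.mul_sum]
    exact Finset.sum_congr rfl fun p _ => by ring
  rw [hpull1, hpull2]
  -- the second-order cancellation
  have hS1 : ∑ p, ∑ q, (∑ k, ∑ l, J p k * J q l * C k l) * H p q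
      = -∑ k, ∑ l, C k l * ∑ j, K i j * P j k l := by
    calc ∑ p, ∑ q, (∑ k, ∑ l, J p k * J q l * C k l) * H p q
        = ∑ p, ∑ q, ∑ k, ∑ l, J p k * J q l * C k l * H p q := by
          refine Finset.sum_congr rfl fun p _ => Finset.sum_congr rfl fun q _ => ?_
          rw [Finset.sum_mul]
          exact Finset.sum_congr rfl fun k _ => Finset.sum_mul ..
      _ = ∑ k, ∑ l, ∑ p, ∑ q, J p k * J q l * C k l * H p q :=
          sum_comm4 _
      _ = ∑ k, ∑ l, C k l * ∑ p, ∑ q, J p k * J q l * H p q := by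
          refine Finset.sum_congr rfl fun k _ => Finset.sum_congr rfl fun l _ => ?_
          rw [Finset.mul_sum]
          refine Finset.sum_congr rfl fun p _ => ?_
          rw [Finset.mul_sum]
          exact Finset.sum_congr rfl fun q _ => by ring
      _ = -∑ k, ∑ l, C k l * ∑ j, K i j * P j k l := by
          rw [← Finset.sum_neg_distrib]
          refine Finset.sum_congr rfl fun k _ => ?_
          rw [← Finset.sum_neg_distrib]
          refine Finset.sum_congr rfl fun l _ => ?_
          have h4 : ∑ p, ∑ q, J p k * J q l * H p q
              = ∑ j, ∑ k', H k' j * J k' k * J j l := by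
            rw [Finset.sum_comm]
            exact Finset.sum_congr rfl fun q _ => Finset.sum_congr rfl fun p _ => by ring
          rw [h4]
          have h5 : ∑ j, ∑ k', H k' j * J k' k * J j l = -∑ j, K i j * P j k l := by
            have := hsec k l
            linarith
          rw [h5]
          ring
  -- expanding G and contracting K·J = 1
  have hμ : ∑ p, (∑ k, μv k * J p k) * K i p = μv i := by
    calc ∑ p, (∑ k, μv k * J p k) * K i p
        = ∑ p, ∑ k, μv k * J p k * K i p := by
          exact Finset.sum_congr rfl fun p _ => Finset.sum_mul ..
      _ = ∑ k, ∑ p, μv k * J p k * K i p := by exact Finset.sum_comm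
      _ = ∑ k, μv k * ∑ p, K i p * J p k := by
          refine Finset.sum_congr rfl fun k _ => ?_
          rw [Finset.mul_sum]
          exact Finset.sum_congr rfl fun p _ => by ring
      _ = ∑ k, μv k * (if i = k then 1 else 0) := by
          exact Finset.sum_congr rfl fun k _ => by rw [hKJ i k]
      _ = μv i := sum_delta_mul (fun k => μv k) i
  have hCP : ∑ p, (∑ k, ∑ l, C k l * P p k l) * K i p
      = ∑ k, ∑ l, C k l * ∑ j, K i j * P j k l := by
    calc ∑ p, (∑ k, ∑ l, C k l * P p k l) * K i p
        = ∑ p, ∑ k, ∑ l, C k l * P p k l * K i p := by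
          refine Finset.sum_congr rfl fun p _ => ?_
          rw [Finset.sum_mul]
          exact Finset.sum_congr rfl fun k _ => Finset.sum_mul ..
      _ = ∑ k, ∑ p, ∑ l, C k l * P p k l * K i p := by exact Finset.sum_comm
      _ = ∑ k, ∑ l, ∑ p, C k l * P p k l * K i p := by
          exact Finset.sum_congr rfl fun k _ => by exact Finset.sum_comm
      _ = ∑ k, ∑ l, C k l * ∑ j, K i j * P j k l := by
          refine Finset.sum_congr rfl fun k _ => Finset.sum_congr rfl fun l _ => ?_
          rw [Finset.mul_sum]
          exact Finset.sum_congr rfl fun p _ => by ring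
  have hGK : ∑ p, (G p + ∑ β, D p β * hv β) * K i p
      = (1/2) * (∑ k, ∑ l, C k l * ∑ j, K i j * P j k l) + μv i
        + ∑ p, (∑ β, D p β * hv β) * K i p := by
    calc ∑ p, (G p + ∑ β, D p β * hv β) * K i p
        = ∑ p, G p * K i p + ∑ p, (∑ β, D p β * hv β) * K i p := by
          rw [← Finset.sum_add_distrib]
          exact Finset.sum_congr rfl fun p _ => by ring
      _ = ((1/2) * (∑ k, ∑ l, C k l * ∑ j, K i j * P j k l) + μv i)
            + ∑ p, (∑ β, D p β * hv β) * K i p := by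
          congr 1
          calc ∑ p, G p * K i p
              = ∑ p, ((1/2) * (∑ k, ∑ l, C k l * P p k l) * K i p
                  + (∑ k, μv k * J p k) * K i p) := by
                refine Finset.sum_congr rfl fun p _ => ?_
                rw [hG p]
                ring
            _ = (1/2) * ∑ p, (∑ k, ∑ l, C k l * P p k l) * K i p
                  + ∑ p, (∑ k, μv k * J p k) * K i p := by
                rw [Finset.sum_add_distrib, Finset.mul_sum]
                congr 1
                exact Finset.sum_congr rfl fun p _ => by ring
            _ = (1/2) * (∑ k, ∑ l, C k l * ∑ j, K i j * P j k l) + μv i := by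
                rw [hCP, hμ]
      _ = (1/2) * (∑ k, ∑ l, C k l * ∑ j, K i j * P j k l) + μv i
            + ∑ p, (∑ β, D p β * hv β) * K i p := by ring
  rw [hS1, hGK]
  have hWS : ∑ j, K i j * ∑ β, D j β * hv β = ∑ p, (∑ β, D p β * hv β) * K i p :=
    Finset.sum_congr rfl fun j _ => by ring
  rw [hWS]
  field_simp
  ring

/-- The inverse of a stochastic transformation:
`T⁻¹ = (Φ⁻¹, (B∘Φ⁻¹)⁻¹, (η∘Φ⁻¹)⁻¹, −((1/√η)·B·h)∘Φ⁻¹)` satisfies `T∘T⁻¹ = (id_{M'}, I, 1, 0)`,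
`T⁻¹∘T = (id_M, I, 1, 0)` (componentwise, with respect to the composition law of stochastic
transformations) and `E_{T⁻¹}(E_T(μ,σ)) = (μ,σ)`. -/
theorem statement3 {n m : ℕ}
    (M M' : Set (Fin n → ℝ)) (hM : IsOpen M) (hM' : IsOpen M')
    (μ : (Fin n → ℝ) → Fin n → ℝ) (σ : (Fin n → ℝ) → Matrix (Fin n) (Fin m) ℝ)
    (hμ : SmoothVec M μ) (hσ : SmoothMat M σ)
    -- T = (Φ, B, η, h) is a stochastic transformation from M to M', with Ψ = Φ⁻¹
    (Φ Ψ : (Fin n → ℝ) → Fin n → ℝ)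
    (B : (Fin n → ℝ) → Matrix (Fin m) (Fin m) ℝ)
    (η : (Fin n → ℝ) → ℝ) (h : (Fin n → ℝ) → Fin m → ℝ)
    (hΦmap : Set.MapsTo Φ M M') (hΨmap : Set.MapsTo Ψ M' M)
    (hΦinv : ∀ x ∈ M, Ψ (Φ x) = x) (hΨinv : ∀ y ∈ M', Φ (Ψ y) = y)
    (hΦs : SmoothVec M Φ) (hΨs : SmoothVec M' Ψ)
    (hBs : SmoothMat M B) (hηs : ContDiffOn ℝ (⊤ : ℕ∞) η M) (hhs : SmoothVec M h)
    (hSO : ∀ x ∈ M, B x * (B x)ᵀ = 1 ∧ (B x).det = 1) (hpos : ∀ x ∈ M, 0 < η x) :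
    -- `T⁻¹∘T = (id_M, I, 1, 0)` on `M`
    (∀ x ∈ M,
      Ψ (Φ x) = x ∧
      (B (Ψ (Φ x)))⁻¹ * B x = 1 ∧
      (η (Ψ (Φ x)))⁻¹ * η x = 1 ∧
      Real.sqrt (η x) •
          ((B x)⁻¹ *ᵥ (-((Real.sqrt (η (Ψ (Φ x))))⁻¹ • (B (Ψ (Φ x)) *ᵥ h (Ψ (Φ x))))))
        + h x = 0) ∧
    -- `T∘T⁻¹ = (id_{M'}, I, 1, 0)` on `M'`
    (∀ y ∈ M',
      Φ (Ψ y) = y ∧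
      B (Ψ y) * (B (Ψ y))⁻¹ = 1 ∧
      η (Ψ y) * (η (Ψ y))⁻¹ = 1 ∧
      Real.sqrt ((η (Ψ y))⁻¹) • (((B (Ψ y))⁻¹)⁻¹ *ᵥ h (Ψ y))
        + -((Real.sqrt (η (Ψ y)))⁻¹ • (B (Ψ y) *ᵥ h (Ψ y))) = 0) ∧
    -- `E_{T⁻¹}(E_T(μ,σ)) = (μ,σ)` on `M`
    (∀ x ∈ M,
      (∀ i, ETmu Ψ Φ (fun y => (η (Ψ y))⁻¹)
          (fun y => -((Real.sqrt (η (Ψ y)))⁻¹ • (B (Ψ y) *ᵥ h (Ψ y))))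
          (ETmu Φ Ψ η h μ σ) (ETsigma Φ Ψ B η σ) x i = μ x i) ∧
      (∀ i α, ETsigma Ψ Φ (fun y => (B (Ψ y))⁻¹) (fun y => (η (Ψ y))⁻¹)
          (ETsigma Φ Ψ B η σ) x i α = σ x i α)) := by
  refine ⟨?_, ?_, ?_⟩
  · -- T⁻¹ ∘ T = identity transformation
    intro x hx
    have hx' := hΦinv x hx
    have hp := hpos x hx
    have hB := (hSO x hx).1
    have hs : Real.sqrt (η x) ≠ 0 := (Real.sqrt_pos.mpr hp).ne'
    refine ⟨hx', ?_, ?_, ?_⟩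
    · rw [hx', Matrix.inv_eq_right_inv hB]
      exact mul_eq_one_comm.mp hB
    · rw [hx']
      exact inv_mul_cancel₀ hp.ne'
    · rw [hx']
      rw [Matrix.mulVec_neg, Matrix.mulVec_smul, Matrix.mulVec_mulVec,
        Matrix.inv_eq_right_inv hB, mul_eq_one_comm.mp hB, Matrix.one_mulVec]
      rw [smul_neg, smul_smul, mul_inv_cancel₀ hs, one_smul]
      simp
  · -- T ∘ T⁻¹ = identity transformation
    intro y hy
    have hx : Ψ y ∈ M := hΨmap hy
    have hp := hpos _ hx
    have hB := (hSO _ hx).1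
    have hdet := (hSO _ hx).2
    refine ⟨hΨinv y hy, ?_, ?_, ?_⟩
    · exact Matrix.mul_nonsing_inv _ (by rw [hdet]; exact isUnit_one)
    · exact mul_inv_cancel₀ hp.ne'
    · have hB2 : ((B (Ψ y))⁻¹)⁻¹ = B (Ψ y) :=
        Matrix.nonsing_inv_nonsing_inv _ (by rw [hdet]; exact isUnit_one)
      rw [hB2, Real.sqrt_inv]
      simp
  · -- E_{T⁻¹}(E_T(μ,σ)) = (μ,σ)
    intro x hx
    have hx' := hΦinv x hx
    have hy : Φ x ∈ M' := hΦmap hx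
    have hp := hpos x hx
    have hB := (hSO x hx).1
    have hdet := (hSO x hx).2
    have hBu : IsUnit (B x).det := by rw [hdet]; exact isUnit_one
    have hBt : (B x)⁻¹ = (B x)ᵀ := Matrix.inv_eq_right_inv hB
    have hBtB : (B x)ᵀ * B x = 1 := mul_eq_one_comm.mp hB
    have hBB : ∀ γ δ, ∑ α, (B x)⁻¹ γ α * B x α δ = if γ = δ then 1 else 0 := by
      intro γ δ
      have : ((B x)⁻¹ * B x) γ δ = if γ = δ then 1 else 0 := by
        rw [hBt, hBtB, Matrix.one_apply]
      rw [← this, Matrix.mul_apply]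
    have hBorth : ∀ γ δ, ∑ α, (B x)⁻¹ γ α * (B x)⁻¹ δ α = if γ = δ then 1 else 0 := by
      intro γ δ
      have h1 : ((B x)⁻¹ * ((B x)⁻¹)ᵀ) γ δ = if γ = δ then 1 else 0 := by
        rw [hBt, Matrix.transpose_transpose, hBtB, Matrix.one_apply]
      rw [← h1, Matrix.mul_apply]
      exact Finset.sum_congr rfl fun α _ => by rw [Matrix.transpose_apply]
    -- chain rule : K * J = 1
    have hKJ : ∀ i' k : Fin n,
        ∑ j, pd j (fun z => Ψ z i') (Φ x) * pd k (fun z => Φ z j) x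
          = if i' = k then 1 else 0 := by
      intro i' k
      have h1 : pd k (fun z => (fun w => Ψ w i') (Φ z)) x
          = ∑ j, pd j (fun w => Ψ w i') (Φ x) * pd k (fun z => Φ z j) x :=
        pd_comp (diffAt_of_contDiffOn hM' (hΨs i') hy)
          (fun j => diffAt_of_contDiffOn hM (hΦs j) hx) k
      rw [← h1]
      have h2 : Set.EqOn (fun z => Ψ (Φ z) i') (fun z => z i') M := by
        intro z hz
        simp [hΦinv z hz]
      rw [pd_congr hM h2 hx k, pd_coord]
    -- second-order chain rule : Hessian cancellation
    have hsec : ∀ (i : Fin n) (p q : Fin n),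
        ∑ j, ∑ k, pd k (pd j (fun z => Ψ z i)) (Φ x) * pd p (fun z => Φ z k) x
            * pd q (fun z => Φ z j) x
          + ∑ j, pd j (fun z => Ψ z i) (Φ x) * pd p (pd q (fun z => Φ z j)) x = 0 := by
      intro i p q
      have h1 := pd_pd_comp hM hM' hΦmap (fun j => hΦs j) (hΨs i) hx p q
      rw [← h1]
      have h2 : Set.EqOn (fun z => Ψ (Φ z) i) (fun z => z i) M := by
        intro z hz
        simp [hΦinv z hz]
      have h3 : Set.EqOn (pd q (fun z => (fun w => Ψ w i) (Φ z)))
          (fun _ => if i = q then 1 else 0) M := by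
        intro z hz
        rw [pd_congr hM h2 hz q, pd_coord]
      rw [pd_congr hM h3 hx p, pd_const]
    constructor
    · -- the drift
      intro i
      simp only [ETmu, ETsigma, gen, Matrix.of_apply, Pi.neg_apply, Pi.smul_apply,
        smul_eq_mul, Matrix.mulVec, dotProduct]
      rw [hx', inv_inv]
      exact drift_alg (η x) hp (σ x) ((B x)⁻¹) (B x) (h x) (μ x)
        (Matrix.of fun a b => pd b (fun z => Φ z a) x)
        (Matrix.of fun a b => pd b (fun z => Ψ z a) (Φ x))
        (fun p q => pd p (pd q (fun z => Ψ z i)) (Φ x))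
        (fun j p q => pd p (pd q (fun z => Φ z j)) x)
        (fun p => (1/2) * ∑ k, ∑ l, (∑ γ, σ x k γ * σ x l γ)
            * pd k (pd l (fun z => Φ z p)) x + ∑ k, μ x k * pd k (fun z => Φ z p) x)
        i hKJ hBorth hBB (hsec i) (fun p => rfl)
    · -- the diffusion coefficient
      intro i α
      have hB2 : ((B x)⁻¹)⁻¹ = B x := Matrix.nonsing_inv_nonsing_inv _ hBu
      simp only [ETsigma, Matrix.of_apply]
      rw [hx', hB2, Real.sqrt_inv, inv_inv]
      exact sigma_alg (η x) hp (σ x) ((B x)⁻¹) (B x)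
        (Matrix.of fun a b => pd b (fun z => Φ z a) x)
        (Matrix.of fun a b => pd b (fun z => Ψ z a) (Φ x))
        i α hKJ hBB
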